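/- Let A ∈ Sⁿ be a symmetric matrix whose support graph G(A) is bipartite. Then A is completely positive semidefinite if and only if A is completely positive. -/

import Mathlib

open Matrix Finset Filter

section helpers

lemma psd_trace_nonneg {d : ℕ} {M : Matrix (Fin d) (Fin d) ℝ} (hM : M.PosSemidef) :
    0 ≤ M.trace := by
  rw [Matrix.trace]
  apply Finset.sum_nonneg
  intro i _
  have := hM.dotProduct_mulVec_nonneg (Pi.single i 1)
  simpa [Matrix.mulVec, dotProduct, Pi.single_apply] using this

open scoped MatrixOrder in
lemma psd_trace_mul_nonneg {d : ℕ} {X Y : Matrix (Fin d) (Fin d) ℝ}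
    (hX : X.PosSemidef) (hY : Y.PosSemidef) : 0 ≤ (X * Y).trace := by
  set S := CFC.sqrt Y with hS
  have hsq : S * S = Y := by
    have := CFC.sq_sqrt Y hY.nonneg
    rwa [pow_two] at this
  have hherm : Sᴴ = S := (CFC.sqrt_nonneg Y).posSemidef.1
  have : (X * Y).trace = (S * X * Sᴴ).trace := by
    rw [hherm, ← hsq, ← Matrix.mul_assoc, Matrix.trace_mul_cycle]
  rw [this]
  exact psd_trace_nonneg (hX.mul_mul_conjTranspose_same S)

lemma cpsd_quadform {n d : ℕ} (A : Matrix (Fin n) (Fin n) ℝ)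
    (X : Fin n → Matrix (Fin d) (Fin d) ℝ)
    (hX : ∀ i, (X i).PosSemidef) (hA : ∀ i j, A i j = ((X i) * (X j)).trace)
    (v : Fin n → ℝ) : 0 ≤ v ⬝ᵥ (A *ᵥ v) := by
  set M : Matrix (Fin d) (Fin d) ℝ := ∑ i, v i • X i with hM
  have hherm : Mᴴ = M := by
    rw [hM, Matrix.conjTranspose_sum]
    exact Finset.sum_congr rfl fun i _ => by
      rw [Matrix.conjTranspose_smul, (hX i).1]; simp
  have key : v ⬝ᵥ (A *ᵥ v) = (Mᴴ * M).trace := by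
    rw [hherm, hM, Finset.sum_mul_sum]
    rw [Matrix.trace_sum]
    simp_rw [Matrix.trace_sum, smul_mul_smul_comm, Matrix.trace_smul]
    simp only [dotProduct, Matrix.mulVec]
    rw [Finset.sum_congr rfl fun i _ => (Finset.mul_sum _ _ _)]
    refine Finset.sum_congr rfl fun i _ => Finset.sum_congr rfl fun j _ => ?_
    rw [hA i j]
    simp [smul_eq_mul]
    ring
  rw [key]
  exact psd_trace_nonneg (Matrix.posSemidef_conjTranspose_mul_self M)

lemma exists_pos_w {n : ℕ} (P : Matrix (Fin n) (Fin n) ℝ)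
    (hpd : P.PosDef) (hoff : ∀ i j, i ≠ j → P i j ≤ 0) :
    ∃ w : Fin n → ℝ, (∀ i, 0 < w i) ∧ ∀ i, ∑ j, P i j * w j = 1 := by
  have hdet : IsUnit P.det := hpd.det_pos.ne'.isUnit
  set w : Fin n → ℝ := P⁻¹ *ᵥ (fun _ => 1) with hw
  have hPw : P *ᵥ w = fun _ => 1 := by
    rw [hw, Matrix.mulVec_mulVec, Matrix.mul_nonsing_inv _ hdet, Matrix.one_mulVec]
  have hPwi : ∀ i, ∑ j, P i j * w j = 1 := by
    intro i
    have := congrFun hPw i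
    simpa [Matrix.mulVec, dotProduct] using this
  -- show w nonneg
  set u : Fin n → ℝ := fun i => |w i| with hu
  set v : Fin n → ℝ := u - w with hv
  have hv0 : ∀ i, 0 ≤ v i := fun i => by
    simp [hv, hu, sub_nonneg, le_abs_self]
  have huvw : u = v + w := by simp [hv]
  -- Q u ≤ Q w
  have hQle : u ⬝ᵥ (P *ᵥ u) ≤ w ⬝ᵥ (P *ᵥ w) := by
    simp only [dotProduct, Matrix.mulVec, Finset.mul_sum]
    refine Finset.sum_le_sum fun i _ => Finset.sum_le_sum fun j _ => ?_
    rcases eq_or_ne i j with rfl | hij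
    · have h : u i * u i = w i * w i := abs_mul_abs_self (w i)
      linear_combination (P i i) * h
    · have h1 : P i j ≤ 0 := hoff i j hij
      have h2 : w i * w j ≤ u i * u j := by
        rw [hu]; calc w i * w j ≤ |w i * w j| := le_abs_self _
        _ = |w i| * |w j| := abs_mul _ _
      nlinarith
  -- expansion
  have hsymP : ∀ i j, P i j = P j i := by
    intro i j
    have := congrFun (congrFun hpd.1.eq i) j
    simpa [Matrix.conjTranspose_apply] using this.symm
  have hsymdot : ∀ a b : Fin n → ℝ, a ⬝ᵥ (P *ᵥ b) = b ⬝ᵥ (P *ᵥ a) := by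
    intro a b
    simp only [dotProduct, Matrix.mulVec, Finset.mul_sum]
    rw [Finset.sum_comm]
    exact Finset.sum_congr rfl fun j _ => Finset.sum_congr rfl fun i _ => by
      rw [hsymP i j]; ring
  have hexp : u ⬝ᵥ (P *ᵥ u) = v ⬝ᵥ (P *ᵥ v) + 2 * (v ⬝ᵥ (P *ᵥ w)) + w ⬝ᵥ (P *ᵥ w) := by
    rw [huvw, Matrix.mulVec_add, dotProduct_add, add_dotProduct,
      add_dotProduct, hsymdot w v]
    ring
  have hvP1 : v ⬝ᵥ (P *ᵥ w) = ∑ i, v i := by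
    rw [hPw]; simp [dotProduct]
  have hsumv : 0 ≤ ∑ i, v i := Finset.sum_nonneg fun i _ => hv0 i
  have hQv : v ⬝ᵥ (P *ᵥ v) + 2 * ∑ i, v i ≤ 0 := by
    rw [← hvP1]; linarith [hexp ▸ hQle]
  have hveq : v = 0 := by
    by_contra hne
    have := hpd.dotProduct_mulVec_pos hne
    simp only [star_trivial] at this
    linarith
  have hw0 : ∀ i, 0 ≤ w i := by
    intro i
    have h0 : v i = 0 := congrFun hveq i
    have h1 : |w i| - w i = 0 := by simpa [hv, hu] using h0
    linarith [abs_nonneg (w i)]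
  refine ⟨w, fun i => ?_, hPwi⟩
  have hPii : 0 < P i i := by
    have hne : (Pi.single i 1 : Fin n → ℝ) ≠ 0 := by
      intro h; simpa using congrFun h i
    have := hpd.dotProduct_mulVec_pos hne
    simpa [Matrix.mulVec, dotProduct, Pi.single_apply] using this
  have h1 : 1 ≤ P i i * w i := by
    have := hPwi i
    have hrest : ∑ j ∈ univ.erase i, P i j * w j ≤ 0 :=
      Finset.sum_nonpos fun j hj => mul_nonpos_of_nonpos_of_nonneg
        (hoff i j (Finset.ne_of_mem_erase hj).symm) (hw0 j)
    have hsplit : ∑ j ∈ univ.erase i, P i j * w j + P i i * w i = ∑ j, P i j * w j :=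
      Finset.sum_erase_add _ _ (Finset.mem_univ i)
    linarith [hsplit ▸ this]
  nlinarith


lemma construction {n : ℕ} (A : Matrix (Fin n) (Fin n) ℝ)
    (hsymA : ∀ i j, A i j = A j i)
    (hnn : ∀ i j, 0 ≤ A i j)
    (f : Fin n → Bool) (hf : ∀ i j, i ≠ j → A i j ≠ 0 → f i ≠ f j)
    {ε : ℝ} (hε : 0 < ε)
    (hpsd : ∀ v : Fin n → ℝ, 0 ≤ v ⬝ᵥ (A *ᵥ v)) :
    ∃ x : Fin n → Fin n × Fin n → ℝ, (∀ i k, 0 ≤ x i k) ∧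
      ∀ i j, ∑ k, x i k * x j k = A i j + if i = j then ε else 0 := by
  classical
  set B : Matrix (Fin n) (Fin n) ℝ :=
    Matrix.of (fun i j => A i j + if i = j then ε else 0) with hB
  have hBapp : ∀ i j, B i j = A i j + if i = j then ε else 0 := fun i j => rfl
  have hsymB : ∀ i j, B i j = B j i := by
    intro i j
    simp only [hBapp, hsymA i j]
    congr 1
    simp [eq_comm]
  have hBnn : ∀ i j, 0 ≤ B i j := by
    intro i j
    rw [hBapp]
    have := hnn i j
    split <;> linarith
  set s : Fin n → ℝ := fun i => if f i then 1 else -1 with hs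
  have hs2 : ∀ i, s i * s i = 1 := by
    intro i; by_cases h : f i <;> simp [hs, h]
  have hsoff : ∀ i j, i ≠ j → s i * s j * B i j = -B i j := by
    intro i j hij
    have hBij : B i j = A i j := by simp [hBapp, hij]
    rcases eq_or_ne (A i j) 0 with h0 | h0
    · rw [hBij, h0]; ring
    · have hfij := hf i j hij h0
      rw [hs, hBij]
      rcases Bool.eq_false_or_eq_true (f i) with hfi | hfi <;>
        rcases Bool.eq_false_or_eq_true (f j) with hfj | hfj <;>
          simp_all <;> ring
  set P : Matrix (Fin n) (Fin n) ℝ := Matrix.of (fun i j => s i * s j * B i j) with hP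
  have hPapp : ∀ i j, P i j = s i * s j * B i j := fun i j => rfl
  have hPpd : P.PosDef := by
    refine Matrix.PosDef.of_dotProduct_mulVec_pos ?_ ?_
    · ext i j
      simp only [Matrix.conjTranspose_apply, hPapp, star_trivial]
      rw [hsymB j i]; ring
    · intro v hv
      simp only [star_trivial]
      set sv : Fin n → ℝ := fun i => s i * v i with hsv
      have key : v ⬝ᵥ (P *ᵥ v) = sv ⬝ᵥ (A *ᵥ sv) + ε * ∑ i, v i * v i := by
        simp only [dotProduct, Matrix.mulVec, Finset.mul_sum]
        rw [← Finset.sum_add_distrib]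
        refine Finset.sum_congr rfl fun i _ => ?_
        have hrepl : ε * (v i * v i) = ∑ j, if j = i then ε * (v i * v i) else 0 := by
          rw [Finset.sum_ite_eq' univ i]
          simp
        rw [hrepl, ← Finset.sum_add_distrib]
        refine Finset.sum_congr rfl fun j _ => ?_
        rcases eq_or_ne j i with rfl | hij
        · simp only [hPapp, hBapp, if_pos rfl, hsv]
          rcases Bool.eq_false_or_eq_true (f j) with hfi | hfi <;> simp [hs, hfi] <;> ring
        · have hBij : B i j = A i j := by rw [hBapp, if_neg (Ne.symm hij), add_zero]
          rw [hPapp, hBij, if_neg hij, hsv]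
          ring
      rw [key]
      obtain ⟨i0, hi0⟩ := Function.ne_iff.mp hv
      have hsum : 0 < ∑ i, v i * v i :=
        Finset.sum_pos' (fun i _ => mul_self_nonneg _)
          ⟨i0, Finset.mem_univ _, mul_self_pos.mpr hi0⟩
      have := hpsd sv
      nlinarith
  obtain ⟨w, hwpos, hPw⟩ := exists_pos_w P hPpd (by
    intro i j hij
    rw [hPapp, hsoff i j hij]
    simpa [hBapp, hij] using hnn i j)
  have hdom : ∀ i, B i i * w i - ∑ j ∈ univ.erase i, B i j * w j = 1 := by
    intro i
    have h1 := hPw i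
    rw [← Finset.sum_erase_add _ _ (Finset.mem_univ i)] at h1
    have h2 : ∑ j ∈ univ.erase i, P i j * w j = - ∑ j ∈ univ.erase i, B i j * w j := by
      rw [← Finset.sum_neg_distrib]
      refine Finset.sum_congr rfl fun j hj => ?_
      rw [hPapp, hsoff i j (Finset.ne_of_mem_erase hj).symm]; ring
    have h3 : P i i * w i = B i i * w i := by
      rw [hPapp, hs2]; ring
    rw [h2, h3] at h1
    linarith
  -- the vectors
  set c : Fin n → Fin n → ℝ := fun i j => Real.sqrt (B i j * w j / w i) with hc
  set L : Fin n → ℝ := fun i => Real.sqrt (B i i - ∑ j ∈ univ.erase i, B i j * w j / w i)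
    with hL
  have hinner : ∀ i, B i i - ∑ j ∈ univ.erase i, B i j * w j / w i = 1 / w i := by
    intro i
    have hwi := (hwpos i).ne'
    rw [← Finset.sum_div, eq_div_iff hwi, sub_mul, div_mul_cancel₀ _ hwi]
    linarith [hdom i]
  have hcsq : ∀ i j, c i j * c i j = B i j * w j / w i := by
    intro i j
    rw [hc]
    exact Real.mul_self_sqrt
      (div_nonneg (mul_nonneg (hBnn i j) (hwpos j).le) (hwpos i).le)
  have hLsq : ∀ i, L i * L i = B i i - ∑ j ∈ univ.erase i, B i j * w j / w i := by
    intro i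
    rw [hL]
    refine Real.mul_self_sqrt ?_
    rw [hinner i]
    exact one_div_nonneg.mpr (hwpos i).le
  set x : Fin n → Fin n × Fin n → ℝ := fun i pq =>
    if pq.1 = i then (if pq.2 = i then L i else c i pq.2 / Real.sqrt 2)
    else if pq.2 = i then c i pq.1 / Real.sqrt 2 else 0 with hx
  have hs2' : Real.sqrt 2 * Real.sqrt 2 = 2 := Real.mul_self_sqrt (by norm_num)
  have hxnn : ∀ i k, 0 ≤ x i k := by
    intro i k
    rw [hx]
    dsimp only
    split_ifs
    · exact Real.sqrt_nonneg _
    · exact div_nonneg (Real.sqrt_nonneg _) (Real.sqrt_nonneg _)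
    · exact div_nonneg (Real.sqrt_nonneg _) (Real.sqrt_nonneg _)
    · exact le_rfl
  refine ⟨x, hxnn, ?_⟩
  intro i j
  rcases eq_or_ne i j with rfl | hij
  · -- diagonal
    rw [if_pos rfl, Fintype.sum_prod_type, ← Finset.sum_erase_add _ _ (Finset.mem_univ i)]
    have hFi : ∑ q, x i (i, q) * x i (i, q)
        = (∑ q ∈ univ.erase i, c i q * c i q / 2) + L i * L i := by
      rw [← Finset.sum_erase_add _ _ (Finset.mem_univ i)]
      congr 1
      · refine Finset.sum_congr rfl fun q hq => ?_
        have hq' : q ≠ i := Finset.ne_of_mem_erase hq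
        simp only [hx, if_pos rfl, if_neg hq']
        rw [div_mul_div_comm, hs2']
      · simp [hx]
    have hFp : ∀ p, p ∈ univ.erase i → ∑ q, x i (p, q) * x i (p, q)
        = c i p * c i p / 2 := by
      intro p hp
      have hp' : p ≠ i := Finset.ne_of_mem_erase hp
      have : ∀ q : Fin n, x i (p, q) * x i (p, q)
          = if q = i then c i p * c i p / 2 else 0 := by
        intro q
        simp only [hx, if_neg hp']
        split_ifs with h
        · rw [div_mul_div_comm, hs2']
        · ring
      rw [Finset.sum_congr rfl fun q _ => this q, Finset.sum_ite_eq' univ i]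
      simp
    rw [Finset.sum_congr rfl hFp, hFi]
    have hsum2 : ∑ q ∈ univ.erase i, c i q * c i q / 2 + ∑ q ∈ univ.erase i, c i q * c i q / 2
        = ∑ q ∈ univ.erase i, c i q * c i q := by
      rw [← Finset.sum_add_distrib]
      exact Finset.sum_congr rfl fun q _ => by ring
    have hcs : ∑ q ∈ univ.erase i, c i q * c i q
        = ∑ q ∈ univ.erase i, B i q * w q / w i :=
      Finset.sum_congr rfl fun q _ => hcsq i q
    have hkey : ∑ p ∈ univ.erase i, c i p * c i p / 2
        + (∑ q ∈ univ.erase i, c i q * c i q / 2 + L i * L i) = B i i := by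
      have hL2 := hLsq i
      linarith [hsum2, hcs]
    simpa [hBapp] using hkey
  · -- off-diagonal
    rw [if_neg hij]
    have hcc : c i j * c j i = B i j := by
      rw [hc]
      dsimp only
      rw [← Real.sqrt_mul
        (div_nonneg (mul_nonneg (hBnn i j) (hwpos j).le) (hwpos i).le)]
      have harg : B i j * w j / w i * (B j i * w i / w j) = B i j * B i j := by
        have hwi := (hwpos i).ne'
        have hwj := (hwpos j).ne'
        rw [hsymB j i]
        field_simp
      rw [harg, Real.sqrt_mul_self (hBnn i j)]
    set t : ℝ := c i j / Real.sqrt 2 * (c j i / Real.sqrt 2) with ht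
    have hpt : ∀ pq : Fin n × Fin n, x i pq * x j pq
        = (if pq = (i, j) then t else 0) + (if pq = (j, i) then t else 0) := by
      rintro ⟨p, q⟩
      by_cases hpi : p = i <;> by_cases hqi : q = i <;>
        by_cases hpj : p = j <;> by_cases hqj : q = j <;>
          simp [hx, ht, hpi, hqi, hpj, hqj, hij, Ne.symm hij, Prod.mk.injEq]
    rw [Finset.sum_congr rfl fun pq _ => hpt pq, Finset.sum_add_distrib,
      Finset.sum_ite_eq' univ, Finset.sum_ite_eq' univ]
    simp only [Finset.mem_univ, if_pos]
    have htt : t + t = c i j * c j i := by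
      rw [ht, div_mul_div_comm, hs2']
      ring
    have hBij : B i j = A i j := by rw [hBapp, if_neg hij, add_zero]
    rw [htt, hcc, hBij, add_zero]

lemma cp_of_bipartite {n : ℕ} (A : Matrix (Fin n) (Fin n) ℝ)
    (hsymA : ∀ i j, A i j = A j i)
    (hnn : ∀ i j, 0 ≤ A i j)
    (f : Fin n → Bool) (hf : ∀ i j, i ≠ j → A i j ≠ 0 → f i ≠ f j)
    (hpsd : ∀ v : Fin n → ℝ, 0 ≤ v ⬝ᵥ (A *ᵥ v)) :
    ∃ y : Fin n → Fin n × Fin n → ℝ, (∀ i k, 0 ≤ y i k) ∧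
      ∀ i j, A i j = ∑ k, y i k * y j k := by
  have hstep : ∀ m : ℕ, ∃ x : Fin n → Fin n × Fin n → ℝ, (∀ i k, 0 ≤ x i k) ∧
      ∀ i j, ∑ k, x i k * x j k = A i j + if i = j then (1:ℝ)/(m+1) else 0 :=
    fun m => construction A hsymA hnn f hf (by positivity) hpsd
  choose xs hxs1 hxs2 using hstep
  set R : Fin n → ℝ := fun i => Real.sqrt (A i i + 1) with hR
  have hbound : ∀ m i k, xs m i k ≤ R i := by
    intro m i k
    have hle : xs m i k * xs m i k ≤ ∑ k', xs m i k' * xs m i k' :=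
      Finset.single_le_sum (f := fun k' => xs m i k' * xs m i k')
        (fun k' _ => mul_self_nonneg _) (Finset.mem_univ k)
    rw [hxs2 m i i, if_pos rfl] at hle
    have h2 : (1:ℝ)/(m+1) ≤ 1 := by
      rw [div_le_one (by positivity)]
      linarith [Nat.cast_nonneg (α := ℝ) m]
    have h3 : xs m i k ^ 2 ≤ A i i + 1 := by rw [pow_two]; linarith
    calc xs m i k = Real.sqrt ((xs m i k) ^ 2) := (Real.sqrt_sq (hxs1 m i k)).symm
      _ ≤ R i := Real.sqrt_le_sqrt h3
  set K : Set (Fin n → Fin n × Fin n → ℝ) :=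
    Set.univ.pi fun i => Set.univ.pi fun _k => Set.Icc 0 (R i) with hK
  have hKc : IsCompact K :=
    isCompact_univ_pi fun i => isCompact_univ_pi fun _k => isCompact_Icc
  have hmem : ∀ m, xs m ∈ K := by
    intro m
    rw [hK, Set.mem_univ_pi]
    intro i
    rw [Set.mem_univ_pi]
    intro k
    exact ⟨hxs1 m i k, hbound m i k⟩
  obtain ⟨y, hyK, φ, hφ, hconv⟩ := hKc.tendsto_subseq hmem
  have hynn : ∀ i k, 0 ≤ y i k := by
    intro i k
    rw [hK, Set.mem_univ_pi] at hyK
    have h1 := hyK i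
    rw [Set.mem_univ_pi] at h1
    exact (h1 k).1
  refine ⟨y, hynn, ?_⟩
  intro i j
  have hcoord : ∀ a b, Filter.Tendsto (fun m => xs (φ m) a b) Filter.atTop (nhds (y a b)) := by
    intro a b
    have h1 := (tendsto_pi_nhds.mp hconv) a
    exact (tendsto_pi_nhds.mp h1) b
  have hlhs : Filter.Tendsto (fun m => ∑ k, xs (φ m) i k * xs (φ m) j k)
      Filter.atTop (nhds (∑ k, y i k * y j k)) :=
    tendsto_finset_sum _ fun k _ => (hcoord i k).mul (hcoord j k)
  have hrhs : Filter.Tendsto (fun m => A i j + if i = j then (1:ℝ)/((φ m : ℕ) + 1) else 0)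
      Filter.atTop (nhds (A i j)) := by
    rcases eq_or_ne i j with rfl | hij
    · simp only [if_pos rfl]
      have h0 : Filter.Tendsto (fun m : ℕ => (1:ℝ)/((m:ℕ)+1)) Filter.atTop (nhds 0) :=
        tendsto_one_div_add_atTop_nhds_zero_nat
      have h1 := h0.comp hφ.tendsto_atTop
      simpa using tendsto_const_nhds.add h1
    · simpa [hij] using (tendsto_const_nhds :
        Filter.Tendsto (fun _ : ℕ => A i i) Filter.atTop (nhds (A i i)))
  have heq : (fun m => ∑ k, xs (φ m) i k * xs (φ m) j k)
      = fun m => A i j + if i = j then (1:ℝ)/((φ m : ℕ)+1) else 0 :=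
    funext fun m => hxs2 (φ m) i j
  rw [heq] at hlhs
  exact (tendsto_nhds_unique hlhs hrhs).symm

end helpers

def CompletelyPSD {n : ℕ} (A : Matrix (Fin n) (Fin n) ℝ) : Prop :=
  ∃ (d : ℕ) (X : Fin n → Matrix (Fin d) (Fin d) ℝ),
    1 ≤ d ∧ (∀ i, (X i).PosSemidef) ∧ ∀ i j, A i j = ((X i) * (X j)).trace

def CompletelyPositive {n : ℕ} (A : Matrix (Fin n) (Fin n) ℝ) : Prop :=
  ∃ (d : ℕ) (x : Fin n → Fin d → ℝ),
    1 ≤ d ∧ (∀ i k, 0 ≤ x i k) ∧ ∀ i j, A i j = ∑ k, x i k * x j k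

/-- If `A` is symmetric and its support graph (edges `{i,j}` with `i ≠ j`, `A i j ≠ 0`)
is bipartite, then `A` is completely psd iff `A` is completely positive. -/
theorem bipartite_csplus_iff_cp {n : ℕ} (A : Matrix (Fin n) (Fin n) ℝ)
    (hsym : A.IsSymm)
    (hbip : ∃ f : Fin n → Bool, ∀ i j, i ≠ j → A i j ≠ 0 → f i ≠ f j) :
    CompletelyPSD A ↔ CompletelyPositive A := by
  constructor
  · rintro ⟨d, X, hd, hX, hA⟩
    obtain ⟨f, hf⟩ := hbip
    have hsymA : ∀ i j, A i j = A j i := fun i j => (hsym.apply j i)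
    have hnn : ∀ i j, 0 ≤ A i j := fun i j => by
      rw [hA i j]; exact psd_trace_mul_nonneg (hX i) (hX j)
    have hpsd : ∀ v : Fin n → ℝ, 0 ≤ v ⬝ᵥ (A *ᵥ v) := cpsd_quadform A X hX hA
    obtain ⟨y, hynn, hyA⟩ := cp_of_bipartite A hsymA hnn f hf hpsd
    refine ⟨n * n + 1, fun i => Fin.snoc (fun k => y i (finProdFinEquiv.symm k)) 0,
      Nat.succ_le_succ (Nat.zero_le _), ?_, ?_⟩
    · intro i k
      refine Fin.lastCases ?_ ?_ k
      · simp
      · intro k'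
        simpa using hynn i _
    · intro i j
      rw [Fin.sum_univ_castSucc]
      simp only [Fin.snoc_castSucc, Fin.snoc_last, mul_zero, add_zero]
      rw [hyA i j]
      exact (Equiv.sum_comp finProdFinEquiv.symm
        fun pq => y i pq * y j pq).symm
  · rintro ⟨d, x, hd, hx, hA⟩
    refine ⟨d, fun i => Matrix.diagonal (x i), hd,
      fun i => Matrix.posSemidef_diagonal_iff.mpr (hx i), ?_⟩
    intro i j
    rw [hA i j, Matrix.diagonal_mul_diagonal, Matrix.trace_diagonal]
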